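/- Fix real parameters T_max > 0, A > 0, L > 0, C₁, C₂, f₁, f₂, κ₁, κ₂ > 0 and 0 < H₁ < H₂, define g(β) = T_max·(2^A/H₂ + 2^(A·β)·(1/H₁ − 1/H₂) − 1/H₁) + (κ₁·L·C₁·f₁² − κ₂·L·C₂·f₂²)·β + κ₂·L·C₂·f₂², and set D = κ₂·L·C₂·f₂² − κ₁·L·C₁·f₁² and W = T_max·A·(ln 2)·(1/H₁ − 1/H₂). If W < D, then β̂₁ = (1/A)·log₂(D/W) satisfies β̂₁ > 0, the derivative of g vanishes at β̂₁, g is strictly decreasing on (−∞, β̂₁], and g is strictly increasing on [β̂₁, ∞). -/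

import Mathlib

open Real

theorem stmt_13 (Tmax A L C₁ C₂ f₁ f₂ κ₁ κ₂ H₁ H₂ : ℝ)
    (hT : 0 < Tmax) (hA : 0 < A) (hL : 0 < L)
    (hC₁ : 0 < C₁) (hC₂ : 0 < C₂) (hf₁ : 0 < f₁) (hf₂ : 0 < f₂)
    (hκ₁ : 0 < κ₁) (hκ₂ : 0 < κ₂) (hH₁ : 0 < H₁) (hH₁₂ : H₁ < H₂)
    (hWD : Tmax * A * Real.log 2 * (1 / H₁ - 1 / H₂)
      < κ₂ * L * C₂ * f₂ ^ 2 - κ₁ * L * C₁ * f₁ ^ 2) :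
    let D : ℝ := κ₂ * L * C₂ * f₂ ^ 2 - κ₁ * L * C₁ * f₁ ^ 2
    let W : ℝ := Tmax * A * Real.log 2 * (1 / H₁ - 1 / H₂)
    let β₁ : ℝ := (1 / A) * Real.logb 2 (D / W)
    let g : ℝ → ℝ := fun β =>
      Tmax * ((2 : ℝ) ^ A / H₂ + (2 : ℝ) ^ (A * β) * (1 / H₁ - 1 / H₂) - 1 / H₁)
        + (κ₁ * L * C₁ * f₁ ^ 2 - κ₂ * L * C₂ * f₂ ^ 2) * β
        + κ₂ * L * C₂ * f₂ ^ 2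
    0 < β₁ ∧ HasDerivAt g 0 β₁ ∧
      StrictAntiOn g (Set.Iic β₁) ∧ StrictMonoOn g (Set.Ici β₁) := by
  intro D W β₁ g
  have hH₂ : 0 < H₂ := hH₁.trans hH₁₂
  have hc : 0 < 1 / H₁ - 1 / H₂ := by
    have : 1 / H₂ < 1 / H₁ := one_div_lt_one_div_of_lt hH₁ hH₁₂
    linarith
  have hlog2 : 0 < Real.log 2 := Real.log_pos (by norm_num)
  have hW : 0 < W := by positivity
  have hD : W < D := hWD
  have hDpos : 0 < D := hW.trans hD
  have hratio : 1 < D / W := (one_lt_div hW).mpr hD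
  have hβpos : 0 < β₁ := by
    have := Real.logb_pos (b := 2) (by norm_num) hratio
    positivity
  -- key identity
  have hkey : (2 : ℝ) ^ (A * β₁) = D / W := by
    have : A * β₁ = Real.logb 2 (D / W) := by
      show A * (1 / A * Real.logb 2 (D / W)) = _
      field_simp
    rw [this, Real.rpow_logb (by norm_num) (by norm_num) (by positivity)]
  -- derivative of g everywhere
  have hg : ∀ x : ℝ, HasDerivAt g (W * (2 : ℝ) ^ (A * x) - D) x := by
    intro x
    have h2 : HasDerivAt (fun β : ℝ => (2 : ℝ) ^ (A * β))
        ((2 : ℝ) ^ (A * x) * Real.log 2 * A) x := by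
      have hbase := (Real.hasStrictDerivAt_const_rpow (by norm_num : (0:ℝ) < 2)
        (A * x)).hasDerivAt
      have hin : HasDerivAt (fun β : ℝ => A * β) A x := by
        simpa using (hasDerivAt_id x).const_mul A
      have := hbase.comp x hin
      simpa [mul_assoc, Function.comp_def] using this
    have h3 : HasDerivAt g
        (Tmax * ((2 : ℝ) ^ (A * x) * Real.log 2 * A * (1 / H₁ - 1 / H₂))
          + (κ₁ * L * C₁ * f₁ ^ 2 - κ₂ * L * C₂ * f₂ ^ 2)) x := by
      have hinner := ((h2.mul_const (1 / H₁ - 1 / H₂)).const_add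
        ((2 : ℝ) ^ A / H₂)).sub_const (1 / H₁)
      have hlin : HasDerivAt (fun β : ℝ =>
          (κ₁ * L * C₁ * f₁ ^ 2 - κ₂ * L * C₂ * f₂ ^ 2) * β)
          (κ₁ * L * C₁ * f₁ ^ 2 - κ₂ * L * C₂ * f₂ ^ 2) x := by
        simpa using (hasDerivAt_id x).const_mul
          (κ₁ * L * C₁ * f₁ ^ 2 - κ₂ * L * C₂ * f₂ ^ 2)
      exact ((hinner.const_mul Tmax).add hlin).add_const _
    convert h3 using 1
    show W * (2 : ℝ) ^ (A * x) - D = _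
    simp only [W, D]
    ring
  have hderiv0 : HasDerivAt g 0 β₁ := by
    have := hg β₁
    rw [hkey] at this
    have hz : W * (D / W) - D = 0 := by field_simp; ring
    rwa [hz] at this
  refine ⟨hβpos, hderiv0, ?_, ?_⟩
  · apply StrictAntiOn.mono (s := Set.Iic β₁) ?_ (le_refl _)
    exact strictAntiOn_of_deriv_neg (convex_Iic β₁)
      (fun x _ => ((hg x).differentiableAt).continuousAt.continuousWithinAt)
      (by
        intro x hx
        rw [interior_Iic] at hx
        rw [(hg x).deriv]
        have h2lt : (2 : ℝ) ^ (A * x) < (2 : ℝ) ^ (A * β₁) := by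
          apply Real.rpow_lt_rpow_left_iff (by norm_num : (1:ℝ) < 2) |>.mpr
          exact mul_lt_mul_of_pos_left hx hA
        rw [hkey] at h2lt
        have : W * (2 : ℝ) ^ (A * x) < W * (D / W) :=
          mul_lt_mul_of_pos_left h2lt hW
        rw [mul_div_cancel₀ _ (ne_of_gt hW)] at this
        linarith)
  · exact strictMonoOn_of_deriv_pos (convex_Ici β₁)
      (fun x _ => ((hg x).differentiableAt).continuousAt.continuousWithinAt)
      (by
        intro x hx
        rw [interior_Ici] at hx
        rw [(hg x).deriv]
        have h2lt : (2 : ℝ) ^ (A * β₁) < (2 : ℝ) ^ (A * x) := by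
          apply Real.rpow_lt_rpow_left_iff (by norm_num : (1:ℝ) < 2) |>.mpr
          exact mul_lt_mul_of_pos_left hx hA
        rw [hkey] at h2lt
        have : W * (D / W) < W * (2 : ℝ) ^ (A * x) :=
          mul_lt_mul_of_pos_left h2lt hW
        rw [mul_div_cancel₀ _ (ne_of_gt hW)] at this
        linarith)
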